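/- Let a > 0 and b ∈ ℝ satisfy b² < 2a, and let h(t) := (a/2)·t² + b·t + 1. Then there exists a C¹ function ζ : ℝ → ℝ with compact support such that ∫_ℝ ζ'(t)²·h(t) dt < (2a − b²)·∫_ℝ ζ(t)²/h(t) dt. In other words, the Hardy-type inequality ∫_ℝ ζ'² h dt ≥ (2a − b²)·∫_ℝ ζ²/h dt for all compactly supported C¹ functions ζ fails. -/

import Mathlib

open MeasureTheory Real Set Filter


lemma maxsq_hasDerivAt (x : ℝ) : HasDerivAt (fun y : ℝ => max y 0 ^ 2) (2 * max x 0) x := by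
  rcases lt_trichotomy x 0 with hx | hx | hx
  · have hev : (fun y : ℝ => max y 0 ^ 2) =ᶠ[nhds x] fun _ => (0:ℝ) := by
      filter_upwards [Iio_mem_nhds hx] with y hy
      have : y ≤ 0 := le_of_lt hy
      simp [max_eq_right this]
    have : HasDerivAt (fun _ : ℝ => (0:ℝ)) 0 x := hasDerivAt_const x 0
    rw [max_eq_right hx.le, mul_zero]
    exact this.congr_of_eventuallyEq hev
  · subst hx
    rw [max_self, mul_zero]
    rw [hasDerivAt_iff_tendsto_slope]
    have hb : ∀ y : ℝ, ‖slope (fun y : ℝ => max y 0 ^ 2) 0 y‖ ≤ |y| := by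
      intro y
      rcases le_or_gt y 0 with hy | hy
      · simp [slope, max_eq_right hy]
      · simp only [slope, max_eq_left hy.le, vsub_eq_sub, sub_zero, max_self]
        have h2 : y⁻¹ • (y ^ 2 - (0:ℝ) ^ 2) = y := by
          rw [smul_eq_mul, zero_pow two_ne_zero, sub_zero, pow_two, ← mul_assoc, inv_mul_cancel₀ hy.ne', one_mul]
        rw [h2, Real.norm_eq_abs]
    have habs : Tendsto (fun y : ℝ => |y|) (nhdsWithin 0 {(0:ℝ)}ᶜ) (nhds 0) := by
      have : Tendsto (fun y : ℝ => |y|) (nhds 0) (nhds 0) := by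
        simpa using continuous_abs.tendsto (0:ℝ)
      exact this.mono_left nhdsWithin_le_nhds
    exact squeeze_zero_norm hb habs
  · have hev : (fun y : ℝ => max y 0 ^ 2) =ᶠ[nhds x] fun y => y ^ 2 := by
      filter_upwards [Ioi_mem_nhds hx] with y hy
      have : (0:ℝ) ≤ y := le_of_lt hy
      simp [max_eq_left this]
    have : HasDerivAt (fun y : ℝ => y ^ 2) (2 * x) x := by
      simpa using hasDerivAt_pow 2 x
    rw [max_eq_left hx.le]
    exact this.congr_of_eventuallyEq hev

lemma maxsq_contDiff : ContDiff ℝ 1 (fun y : ℝ => max y 0 ^ 2) := by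
  rw [contDiff_one_iff_deriv]
  refine ⟨fun x => (maxsq_hasDerivAt x).differentiableAt, ?_⟩
  have : deriv (fun y : ℝ => max y 0 ^ 2) = fun x => 2 * max x 0 := by
    funext x; exact (maxsq_hasDerivAt x).deriv
  rw [this]
  exact continuous_const.mul (continuous_id.max continuous_const)

set_option maxHeartbeats 2000000 in
theorem stmt18 (a b : ℝ) (ha : 0 < a) (hb : b ^ 2 < 2 * a)
    (h : ℝ → ℝ) (hh : ∀ t : ℝ, h t = a / 2 * t ^ 2 + b * t + 1) :
    ∃ ζ : ℝ → ℝ, ContDiff ℝ 1 ζ ∧ HasCompactSupport ζ ∧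
      (∫ t : ℝ, (deriv ζ t) ^ 2 * h t) < (2 * a - b ^ 2) * ∫ t : ℝ, (ζ t) ^ 2 / h t := by
  have hD : (0:ℝ) < 2*a - b^2 := by nlinarith
  set s : ℝ := Real.sqrt (2*a - b^2) with hs_def
  have hs0 : 0 < s := Real.sqrt_pos.mpr hD
  have hs2 : s^2 = 2*a - b^2 := Real.sq_sqrt hD.le
  set r : ℝ := Real.sqrt 3 with hr_def
  have hr0 : 0 < r := Real.sqrt_pos.mpr (by norm_num)
  have hr2 : r^2 = 3 := Real.sq_sqrt (by norm_num)
  set t₁ : ℝ := (-b - r*s)/a with ht₁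
  set t₂ : ℝ := (-b + r*s)/a with ht₂
  refine ⟨fun t => max (3 - ((a*t+b)/s)^2) 0 ^ 2, ?_, ?_, ?_⟩
  · refine maxsq_contDiff.comp ?_
    exact contDiff_const.sub ((((contDiff_const.mul contDiff_id).add contDiff_const).div_const s).pow 2)
  · refine HasCompactSupport.intro (isCompact_Icc (a := t₁) (b := t₂)) ?_
    intro t ht
    simp only [mem_Icc, not_and_or, not_le] at ht
    have key3s : 3*s^2 = (r*s)^2 := by rw [mul_pow, hr2]
    have hv : 3 - ((a*t+b)/s)^2 ≤ 0 := by
      rw [sub_nonpos, div_pow, le_div_iff₀ (by positivity), key3s]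
      rcases ht with ht | ht
      · have h1 : a*t + b < -(r*s) := by
          rw [ht₁, lt_div_iff₀ ha] at ht
          nlinarith
        nlinarith [mul_pos hr0 hs0]
      · have h1 : r*s < a*t + b := by
          rw [ht₂, div_lt_iff₀ ha] at ht
          nlinarith
        nlinarith [mul_pos hr0 hs0]
    rw [max_eq_right hv]
    norm_num
  · set ζ : ℝ → ℝ := fun t => max (3 - ((a*t+b)/s)^2) 0 ^ 2 with hζdef
    set F₁ : ℝ → ℝ := fun v => 8*a*(v^2*(max (3 - v^2) 0)^2*(1+v^2)) with hF₁
    set F₂ : ℝ → ℝ := fun v => (2*a/(2*a-b^2))*((max (3 - v^2) 0)^4/(1+v^2)) with hF₂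
    have hu : ∀ t : ℝ, (a/s)*t + b/s = (a*t+b)/s := fun t => by ring
    have hderiv : ∀ t, HasDerivAt ζ
        (2 * max (3 - ((a*t+b)/s)^2) 0 * (-(2*((a*t+b)/s))*(a/s))) t := by
      intro t
      have hinner : HasDerivAt (fun t : ℝ => 3 - ((a*t+b)/s)^2) (-(2*((a*t+b)/s))*(a/s)) t := by
        have h1 : HasDerivAt (fun t : ℝ => (a*t+b)/s) (a/s) t := by
          have h0 := ((hasDerivAt_id t).const_mul a).add_const b
          have h2 := h0.div_const s
          simpa using h2
        have h3 := (h1.pow 2).const_sub 3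
        refine h3.congr_deriv ?_
        ring
      have := (maxsq_hasDerivAt (3 - ((a*t+b)/s)^2)).comp t hinner
      exact this
    have hdζ : ∀ t, deriv ζ t = 2 * max (3 - ((a*t+b)/s)^2) 0 * (-(2*((a*t+b)/s))*(a/s)) :=
      fun t => (hderiv t).deriv
    have hht : ∀ t : ℝ, h t = (2*a-b^2)/(2*a)*(1+((a*t+b)/s)^2) := by
      intro t
      rw [hh t, div_pow, hs2]
      have hD' : a*2 - b^2 ≠ 0 := ne_of_gt (by linarith)
      field_simp
      ring
    have hpt1 : ∀ t : ℝ, (deriv ζ t)^2 * h t = F₁ ((a/s)*t + b/s) := by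
      intro t
      rw [hdζ t, hht t, hF₁]
      simp only [hu t]
      set M := max (3 - ((a*t+b)/s)^2) 0 with hM
      set v := (a*t+b)/s with hv
      have e1 : (2*M*(-(2*v)*(a/s)))^2 = 16*M^2*v^2*a^2/s^2 := by ring
      rw [e1, hs2]
      have hD' : a*2 - b^2 ≠ 0 := ne_of_gt (by linarith)
      field_simp
      ring
    have hpt2 : ∀ t : ℝ, (ζ t)^2 / h t = F₂ ((a/s)*t + b/s) := by
      intro t
      rw [hζdef, hht t, hF₂]
      simp only [hu t]
      set M := max (3 - ((a*t+b)/s)^2) 0 with hM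
      set v := (a*t+b)/s with hv
      have h1v : (0:ℝ) < 1 + v^2 := by positivity
      field_simp
    have hMzero : ∀ t : ℝ, t ∉ Ioc t₁ t₂ → max (3 - ((a/s)*t + b/s)^2) 0 = 0 := by
      intro t ht
      rw [mem_Ioc, not_and_or, not_lt, not_le] at ht
      have key3s : 3*s^2 = (r*s)^2 := by rw [mul_pow, hr2]
      rw [max_eq_right]
      rw [sub_nonpos, hu t, div_pow, le_div_iff₀ (by positivity), key3s]
      rcases ht with ht | ht
      · have h1 : a*t + b ≤ -(r*s) := by
          rw [ht₁, le_div_iff₀ ha] at ht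
          nlinarith
        nlinarith [mul_pos hr0 hs0]
      · have h1 : r*s < a*t + b := by
          rw [ht₂, div_lt_iff₀ ha] at ht
          nlinarith
        nlinarith [mul_pos hr0 hs0]
    have hend1 : (a/s)*t₁ + b/s = -r := by
      rw [ht₁]
      field_simp
      ring
    have hend2 : (a/s)*t₂ + b/s = r := by
      rw [ht₂]
      field_simp
      ring
    have has : a/s ≠ 0 := ne_of_gt (div_pos ha hs0)
    have e1 : (∫ t : ℝ, (deriv ζ t)^2 * h t) = (s/a) * ∫ v in (-r)..r, F₁ v := by
      calc (∫ t : ℝ, (deriv ζ t)^2 * h t) = ∫ t : ℝ, F₁ ((a/s)*t + b/s) := by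
            simp only [hpt1]
        _ = ∫ t in t₁..t₂, F₁ ((a/s)*t + b/s) := by
            refine (intervalIntegral.integral_eq_integral_of_support_subset ?_).symm
            intro t ht
            by_contra hmem
            apply ht
            simp only [hF₁, hMzero t hmem]
            ring
        _ = (a/s)⁻¹ • ∫ v in ((a/s)*t₁ + b/s)..((a/s)*t₂ + b/s), F₁ v :=
            intervalIntegral.integral_comp_mul_add F₁ has (b/s)
        _ = (s/a) * ∫ v in (-r)..r, F₁ v := by
            rw [hend1, hend2, inv_div, smul_eq_mul]
    have e2 : (∫ t : ℝ, (ζ t)^2 / h t) = (s/a) * ∫ v in (-r)..r, F₂ v := by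
      calc (∫ t : ℝ, (ζ t)^2 / h t) = ∫ t : ℝ, F₂ ((a/s)*t + b/s) := by
            simp only [hpt2]
        _ = ∫ t in t₁..t₂, F₂ ((a/s)*t + b/s) := by
            refine (intervalIntegral.integral_eq_integral_of_support_subset ?_).symm
            intro t ht
            by_contra hmem
            apply ht
            simp only [hF₂, hMzero t hmem]
            simp
        _ = (a/s)⁻¹ • ∫ v in ((a/s)*t₁ + b/s)..((a/s)*t₂ + b/s), F₂ v :=
            intervalIntegral.integral_comp_mul_add F₂ has (b/s)
        _ = (s/a) * ∫ v in (-r)..r, F₂ v := by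
            rw [hend1, hend2, inv_div, smul_eq_mul]
    have v1 : (∫ v in (-r)..r, F₁ v) = 2304*a/35*r := by
      have hEq : EqOn F₁ (fun v : ℝ => 8*a*(9*v^2+3*v^4-5*v^6+v^8)) (uIcc (-r) r) := by
        intro v hv
        rw [uIcc_of_le (by linarith)] at hv
        have h2 : v^2 ≤ 3 := by nlinarith [hv.1, hv.2]
        simp only [hF₁]
        rw [max_eq_left (by linarith)]
        ring
      rw [intervalIntegral.integral_congr hEq]
      rw [intervalIntegral.integral_eq_sub_of_hasDerivAt
        (f := fun v : ℝ => 8*a*(3*v^3+3/5*v^5-5/7*v^7+1/9*v^9))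
        (f' := fun v : ℝ => 8*a*(9*v^2+3*v^4-5*v^6+v^8))
        (fun x _ => by
          have h3 : HasDerivAt (fun v : ℝ => 3*v^3+3/5*v^5-5/7*v^7+1/9*v^9)
              (9*x^2+3*x^4-5*x^6+x^8) x := by
            have p := ((((hasDerivAt_pow 3 x).const_mul (3:ℝ)).add
              ((hasDerivAt_pow 5 x).const_mul (3/5:ℝ))).sub
              ((hasDerivAt_pow 7 x).const_mul (5/7:ℝ))).add
              ((hasDerivAt_pow 9 x).const_mul (1/9:ℝ))
            refine p.congr_deriv ?_
            push_cast
            ring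
          exact h3.const_mul (8*a))
        ((by fun_prop : Continuous fun v : ℝ => 8*a*(9*v^2+3*v^4-5*v^6+v^8)).intervalIntegrable _ _)]
      linear_combination (a*(16/9*r^7 - 128/21*r^5 - 304/35*r^3 + 768/35*r)) * hr2
    have harc : arctan r = π/3 := by
      rw [hr_def, ← Real.tan_pi_div_three]
      exact Real.arctan_tan (by linarith [Real.pi_pos]) (by linarith [Real.pi_pos])
    have v2 : (∫ v in (-r)..r, F₂ v) = (2*a/(2*a-b^2))*(512*π/3 - 8928/35*r) := by
      have hEq : EqOn F₂
          (fun v : ℝ => (2*a/(2*a-b^2))*(256*(1/(1+v^2))-175+67*v^2-13*v^4+v^6)) (uIcc (-r) r) := by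
        intro v hv
        rw [uIcc_of_le (by linarith)] at hv
        have h2 : v^2 ≤ 3 := by nlinarith [hv.1, hv.2]
        have h1v : (0:ℝ) < 1+v^2 := by positivity
        simp only [hF₂]
        rw [max_eq_left (by linarith)]
        rw [mul_eq_mul_left_iff]
        left
        field_simp
        ring
      rw [intervalIntegral.integral_congr hEq]
      rw [intervalIntegral.integral_eq_sub_of_hasDerivAt
        (f := fun v : ℝ => (2*a/(2*a-b^2))*(256*arctan v-175*v+67/3*v^3-13/5*v^5+1/7*v^7))
        (f' := fun v : ℝ => (2*a/(2*a-b^2))*(256*(1/(1+v^2))-175+67*v^2-13*v^4+v^6))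
        (fun x _ => by
          have h3 : HasDerivAt
              (fun v : ℝ => 256*arctan v-175*v+67/3*v^3-13/5*v^5+1/7*v^7)
              (256*(1/(1+x^2))-175+67*x^2-13*x^4+x^6) x := by
            have p := (((((Real.hasDerivAt_arctan x).const_mul (256:ℝ)).sub
              ((hasDerivAt_id' (x := x)).const_mul (175:ℝ))).add
              ((hasDerivAt_pow 3 x).const_mul (67/3:ℝ))).sub
              ((hasDerivAt_pow 5 x).const_mul (13/5:ℝ))).add
              ((hasDerivAt_pow 7 x).const_mul (1/7:ℝ))
            refine p.congr_deriv ?_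
            push_cast
            ring
          exact h3.const_mul (2*a/(2*a-b^2)))
        (Continuous.intervalIntegrable (μ := volume) (by
          have h0 : Continuous fun v : ℝ => 1/(1+v^2) :=
            Continuous.div continuous_const (by fun_prop) (fun x => by positivity)
          exact continuous_const.mul (((((continuous_const.mul h0).sub continuous_const).add
            (continuous_const.mul (continuous_pow 2))).sub (continuous_const.mul (continuous_pow 4))).add
            (continuous_pow 6))) _ _)]
      simp only [Real.arctan_neg, harc]
      linear_combination ((2*a/(2*a-b^2))*(2/7*r^5 - 152/35*r^3 + 3322/105*r)) * hr2
    rw [e1, e2, v1, v2]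
    have hL : (s/a)*(2304*a/35*r) = s*(2304/35*r) := by
      field_simp
    have hR : (2*a-b^2)*((s/a)*((2*a/(2*a-b^2))*(512*π/3 - 8928/35*r))) = s*(2*(512*π/3 - 8928/35*r)) := by
      generalize (512*π/3 - 8928/35*r : ℝ) = X
      field_simp
    rw [hL, hR]
    have hr174 : r < 1.74 := by nlinarith
    have hkey : 2304/35*r < 2*(512*π/3 - 8928/35*r) := by
      nlinarith [Real.pi_gt_d6]
    exact mul_lt_mul_of_pos_left hkey hs0
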